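/- Let R(x,z) = z^r + Σ_{k=1}^r c_k(x) z^{r-k} with c_k real analytic on an open set Ω ⊂ ℝ^m, and suppose that for some x₀ ∈ Ω we have R(x₀,z) = P₀(z) Q₀(z) where P₀, Q₀ are monic of degrees p, q = r - p and have no common complex root. Then there exist a neighbourhood U of x₀ and real analytic functions a_i : U → ℝ (i ≤ p), b_j : U → ℝ (j ≤ q) such that R(x,z) = (z^p + Σ a_i(x) z^{p-i})(z^q + Σ b_j(x) z^{q-j}) for all x ∈ U, with the factors specializing to P₀ and Q₀ at x₀. -/

import Mathlib

open Polynomial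

/-- The monic polynomial `z^n + a_1 z^{n-1} + ... + a_n` associated to a coefficient
vector `a ∈ ℝ^n`. -/
noncomputable def monicOfCoeffs (n : ℕ) (a : Fin n → ℝ) : Polynomial ℝ :=
  Polynomial.X ^ n + ∑ i : Fin n, Polynomial.C (a i) * Polynomial.X ^ (n - 1 - (i : ℕ))

noncomputable def toPolyAux (n : ℕ) (v : Fin n → ℝ) : Polynomial ℝ :=
  ∑ i : Fin n, Polynomial.C (v i) * Polynomial.X ^ (n - 1 - (i : ℕ))

lemma monicOfCoeffs_eq (n : ℕ) (a : Fin n → ℝ) :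
    monicOfCoeffs n a = X ^ n + toPolyAux n a := rfl

lemma toPolyAux_degree_lt (n : ℕ) (v : Fin n → ℝ) :
    (toPolyAux n v).degree < n := by
  apply lt_of_le_of_lt (Polynomial.degree_sum_le _ _)
  apply Finset.sup_lt_iff (by exact_mod_cast WithBot.bot_lt_coe n) |>.2
  intro i _
  calc (C (v i) * X ^ (n - 1 - (i:ℕ)) : Polynomial ℝ).degree
      ≤ (X ^ (n - 1 - (i:ℕ)) : Polynomial ℝ).degree := by
        rcases eq_or_ne (v i) 0 with h | h
        · simp [h]
        · rw [Polynomial.degree_C_mul h]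
    _ ≤ (n - 1 - (i:ℕ) : ℕ) := Polynomial.degree_X_pow_le _
    _ < (n : WithBot ℕ) := by
        have : n - 1 - (i:ℕ) < n := by have := i.2; omega
        exact_mod_cast this

lemma toPolyAux_coeff_lt (n : ℕ) (v : Fin n → ℝ) (j : ℕ) (hj : j < n) :
    (toPolyAux n v).coeff j = v ⟨n - 1 - j, by omega⟩ := by
  rw [toPolyAux, Polynomial.finset_sum_coeff]
  rw [Finset.sum_eq_single (⟨n - 1 - j, by omega⟩ : Fin n)]
  · simp [Polynomial.coeff_C_mul, Polynomial.coeff_X_pow, show n - 1 - (n - 1 - j) = j by omega]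
  · intro i _ hne
    have : n - 1 - (i : ℕ) ≠ j := by
      intro h; apply hne; ext; simp; omega
    simp [Polynomial.coeff_C_mul, Polynomial.coeff_X_pow, Ne.symm this]
  · simp

lemma toPolyAux_coeff_ge (n : ℕ) (v : Fin n → ℝ) (j : ℕ) (hj : n ≤ j) :
    (toPolyAux n v).coeff j = 0 :=
  Polynomial.coeff_eq_zero_of_degree_lt ((toPolyAux_degree_lt n v).trans_le (by exact_mod_cast hj))

lemma toPolyAux_eq_zero_iff (n : ℕ) (v : Fin n → ℝ) :
    toPolyAux n v = 0 ↔ v = 0 := by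
  constructor
  · intro h
    funext i
    have := toPolyAux_coeff_lt n v (n - 1 - (i : ℕ)) (by omega)
    rw [h] at this
    simp only [Polynomial.coeff_zero] at this
    have hi : (⟨n - 1 - (n - 1 - (i:ℕ)), by omega⟩ : Fin n) = i := by
      ext; simp; omega
    rw [hi] at this
    simpa using this.symm
  · rintro rfl; simp [toPolyAux]

lemma toPolyAux_add (n : ℕ) (v w : Fin n → ℝ) :
    toPolyAux n (v + w) = toPolyAux n v + toPolyAux n w := by
  simp [toPolyAux, ← Finset.sum_add_distrib, add_mul]

lemma toPolyAux_smul (n : ℕ) (t : ℝ) (v : Fin n → ℝ) :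
    toPolyAux n (t • v) = Polynomial.C t * toPolyAux n v := by
  simp [toPolyAux, Finset.mul_sum, mul_assoc]

lemma toPolyAux_sub (n : ℕ) (v w : Fin n → ℝ) :
    toPolyAux n (v - w) = toPolyAux n v - toPolyAux n w := by
  have := toPolyAux_add n (v - w) w
  rw [sub_add_cancel] at this
  rw [this]; ring

lemma monicOfCoeffs_monic (n : ℕ) (a : Fin n → ℝ) : (monicOfCoeffs n a).Monic := by
  rw [monicOfCoeffs_eq]
  exact Polynomial.monic_X_pow_add (toPolyAux_degree_lt n a)

lemma monicOfCoeffs_degree (n : ℕ) (a : Fin n → ℝ) : (monicOfCoeffs n a).degree = n := by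
  rw [monicOfCoeffs_eq, add_comm]
  rw [Polynomial.degree_add_eq_right_of_degree_lt]
  · exact Polynomial.degree_X_pow n
  · rw [Polynomial.degree_X_pow]; exact toPolyAux_degree_lt n a

lemma monicOfCoeffs_natDegree (n : ℕ) (a : Fin n → ℝ) : (monicOfCoeffs n a).natDegree = n :=
  Polynomial.natDegree_eq_of_degree_eq_some (monicOfCoeffs_degree n a)

lemma monicOfCoeffs_coeff_lt (n : ℕ) (a : Fin n → ℝ) (j : ℕ) (hj : j < n) :
    (monicOfCoeffs n a).coeff j = a ⟨n - 1 - j, by omega⟩ := by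
  rw [monicOfCoeffs_eq, Polynomial.coeff_add, Polynomial.coeff_X_pow,
    toPolyAux_coeff_lt n a j hj, if_neg (by omega)]
  simp

lemma monicOfCoeffs_recon (n : ℕ) (P : Polynomial ℝ) (hm : P.Monic) (hd : P.natDegree = n) :
    monicOfCoeffs n (fun i => P.coeff (n - 1 - (i : ℕ))) = P := by
  apply Polynomial.ext
  intro j
  rcases lt_trichotomy j n with h | h | h
  · rw [monicOfCoeffs_coeff_lt n _ j h]
    simp only []
    congr 1
    omega
  · subst h
    have h1 : (monicOfCoeffs j (fun i => P.coeff (j - 1 - (i : ℕ)))).coeff j = 1 := by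
      have := (monicOfCoeffs_monic j (fun i => P.coeff (j - 1 - (i : ℕ)))).coeff_natDegree
      rwa [monicOfCoeffs_natDegree] at this
    have h2 : P.coeff j = 1 := by
      have := hm.coeff_natDegree
      rwa [hd] at this
    rw [h1, h2]
  · rw [Polynomial.coeff_eq_zero_of_natDegree_lt (by rw [monicOfCoeffs_natDegree]; exact h),
      Polynomial.coeff_eq_zero_of_natDegree_lt (by rw [hd]; exact h)]

lemma analyticOnNhd_monicOfCoeffs_coeff (n u : ℕ) :
    AnalyticOnNhd ℝ (fun v : Fin n → ℝ => (monicOfCoeffs n v).coeff u) Set.univ := by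
  by_cases h : u < n
  · have heq : (fun v : Fin n → ℝ => (monicOfCoeffs n v).coeff u)
        = fun v => (ContinuousLinearMap.proj (R := ℝ) (φ := fun _ : Fin n => ℝ)
            ⟨n - 1 - u, by omega⟩) v := by
      funext v
      rw [monicOfCoeffs_coeff_lt n v u h]
      rfl
    rw [heq]
    exact (ContinuousLinearMap.proj (R := ℝ) (φ := fun _ : Fin n => ℝ)
      ⟨n - 1 - u, by omega⟩).analyticOnNhd _
  · have heq : (fun v : Fin n → ℝ => (monicOfCoeffs n v).coeff u)
        = fun _ => (if u = n then (1 : ℝ) else 0) := by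
      funext v
      rw [monicOfCoeffs_eq, Polynomial.coeff_add, Polynomial.coeff_X_pow,
        toPolyAux_coeff_ge n v u (by omega), add_zero]
    rw [heq]
    exact analyticOnNhd_const

lemma analyticAt_prodCoeff (p q j : ℕ) (x : (Fin p → ℝ) × (Fin q → ℝ)) :
    AnalyticAt ℝ
      (fun x : (Fin p → ℝ) × (Fin q → ℝ) =>
        (monicOfCoeffs p x.1 * monicOfCoeffs q x.2).coeff j) x := by
  have heq : (fun x : (Fin p → ℝ) × (Fin q → ℝ) =>
      (monicOfCoeffs p x.1 * monicOfCoeffs q x.2).coeff j)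
      = fun x => ∑ uv ∈ Finset.HasAntidiagonal.antidiagonal j,
          (monicOfCoeffs p x.1).coeff uv.1 * (monicOfCoeffs q x.2).coeff uv.2 := by
    funext x
    exact Polynomial.coeff_mul _ _ _
  rw [heq]
  apply Finset.analyticAt_fun_sum
  intro uv _
  apply AnalyticAt.mul
  · exact (analyticOnNhd_monicOfCoeffs_coeff p uv.1 x.1 trivial).comp
      ((ContinuousLinearMap.fst ℝ _ _).analyticAt x)
  · exact (analyticOnNhd_monicOfCoeffs_coeff q uv.2 x.2 trivial).comp
      ((ContinuousLinearMap.snd ℝ _ _).analyticAt x)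

lemma withBot_add_lt (a : WithBot ℕ) (p q : ℕ) (h : a < (p : WithBot ℕ)) :
    a + (q : WithBot ℕ) < ((p + q : ℕ) : WithBot ℕ) := by
  induction a using WithBot.recBotCoe with
  | bot => rw [WithBot.bot_add]; exact WithBot.bot_lt_coe _
  | coe n =>
    simp only [Nat.cast_withBot, ← WithBot.coe_add] at h ⊢
    rw [WithBot.coe_lt_coe] at h ⊢
    omega

/-- If `R(x,z) = z^r + ∑ c_k(x) z^{r-k}` has real analytic coefficients on an open
`Ω ⊂ ℝ^m` and `R(x₀, ·) = P₀ · Q₀` with `P₀, Q₀` monic of degrees `p`, `q = r - p`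
without common complex roots, then on a neighbourhood `U` of `x₀` the family splits
analytically as a product of monic families of degrees `p` and `q`, specializing to
`P₀` and `Q₀` at `x₀`. -/
theorem analytic_splitting (m r p q : ℕ) (hpq : p + q = r)
    (Ω : Set (Fin m → ℝ)) (hΩ : IsOpen Ω)
    (c : Fin r → (Fin m → ℝ) → ℝ) (hc : ∀ k, AnalyticOnNhd ℝ (c k) Ω)
    (x₀ : Fin m → ℝ) (hx₀ : x₀ ∈ Ω)
    (P₀ Q₀ : Polynomial ℝ) (hP₀ : P₀.Monic) (hP₀d : P₀.natDegree = p)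
    (hQ₀ : Q₀.Monic) (hQ₀d : Q₀.natDegree = q)
    (hnc : ∀ z : ℂ, ¬(Polynomial.aeval z P₀ = 0 ∧ Polynomial.aeval z Q₀ = 0))
    (hsplit : monicOfCoeffs r (fun k => c k x₀) = P₀ * Q₀) :
    ∃ (U : Set (Fin m → ℝ)) (a : (Fin m → ℝ) → (Fin p → ℝ))
      (b : (Fin m → ℝ) → (Fin q → ℝ)),
      IsOpen U ∧ x₀ ∈ U ∧ U ⊆ Ω ∧
      AnalyticOnNhd ℝ a U ∧ AnalyticOnNhd ℝ b U ∧
      (∀ x ∈ U, monicOfCoeffs r (fun k => c k x) =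
        monicOfCoeffs p (a x) * monicOfCoeffs q (b x)) ∧
      monicOfCoeffs p (a x₀) = P₀ ∧ monicOfCoeffs q (b x₀) = Q₀ := by
  classical
  -- coprimality
  have hcop : IsCoprime P₀ Q₀ := by
    rw [Polynomial.isCoprime_iff_aeval_ne_zero_of_isAlgClosed ℝ ℂ P₀ Q₀]
    intro z
    have := hnc z
    tauto
  -- base points
  set a₀ : Fin p → ℝ := fun i => P₀.coeff (p - 1 - (i : ℕ)) with ha₀
  set b₀ : Fin q → ℝ := fun j => Q₀.coeff (q - 1 - (j : ℕ)) with hb₀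
  have hPa : monicOfCoeffs p a₀ = P₀ := monicOfCoeffs_recon p P₀ hP₀ hP₀d
  have hQb : monicOfCoeffs q b₀ = Q₀ := monicOfCoeffs_recon q Q₀ hQ₀ hQ₀d
  set X₀ : (Fin p → ℝ) × (Fin q → ℝ) := (a₀, b₀) with hX₀
  -- the multiplication map on coefficients
  set Φ : (Fin p → ℝ) × (Fin q → ℝ) → (Fin r → ℝ) :=
    fun x k => (monicOfCoeffs p x.1 * monicOfCoeffs q x.2).coeff (r - 1 - (k : ℕ)) with hΦ
  have hΦana : ∀ x, AnalyticAt ℝ Φ x := fun x =>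
    AnalyticAt.pi fun k => analyticAt_prodCoeff p q (r - 1 - (k : ℕ)) x
  -- the Sylvester-type linear map
  set Lf : (Fin p → ℝ) × (Fin q → ℝ) →ₗ[ℝ] (Fin r → ℝ) :=
    { toFun := fun x k => (toPolyAux p x.1 * Q₀ + P₀ * toPolyAux q x.2).coeff (r - 1 - (k : ℕ))
      map_add' := by
        intro x y
        funext k
        simp only [Prod.fst_add, Prod.snd_add, toPolyAux_add, add_mul, mul_add,
          Polynomial.coeff_add, Pi.add_apply]
        ring
      map_smul' := by
        intro t x
        funext k
        simp only [Prod.smul_fst, Prod.smul_snd, toPolyAux_smul, RingHom.id_apply,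
          Pi.smul_apply, smul_eq_mul]
        rw [show Polynomial.C t * toPolyAux p x.1 * Q₀ + P₀ * (Polynomial.C t * toPolyAux q x.2)
            = Polynomial.C t * (toPolyAux p x.1 * Q₀ + P₀ * toPolyAux q x.2) by ring,
          Polynomial.coeff_C_mul] } with hLf
  have hLfapply : ∀ x k, Lf x k
      = (toPolyAux p x.1 * Q₀ + P₀ * toPolyAux q x.2).coeff (r - 1 - (k : ℕ)) := fun x k => rfl
  have hP₀deg : P₀.degree = (p : WithBot ℕ) := by
    rw [Polynomial.degree_eq_natDegree hP₀.ne_zero, hP₀d]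
  have hQ₀deg : Q₀.degree = (q : WithBot ℕ) := by
    rw [Polynomial.degree_eq_natDegree hQ₀.ne_zero, hQ₀d]
  -- degree bound for the Sylvester image
  have hsyl_deg : ∀ x : (Fin p → ℝ) × (Fin q → ℝ),
      (toPolyAux p x.1 * Q₀ + P₀ * toPolyAux q x.2).degree < (r : WithBot ℕ) := by
    intro x
    apply lt_of_le_of_lt (Polynomial.degree_add_le _ _)
    apply max_lt
    · apply lt_of_le_of_lt (Polynomial.degree_mul_le _ _)
      rw [hQ₀deg, ← hpq]
      exact withBot_add_lt _ p q (toPolyAux_degree_lt p x.1)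
    · apply lt_of_le_of_lt (Polynomial.degree_mul_le _ _)
      rw [hP₀deg, ← hpq]
      rw [show ((p : WithBot ℕ) + (toPolyAux q x.2).degree)
          = ((toPolyAux q x.2).degree + (p : WithBot ℕ)) from add_comm _ _,
        show ((p + q : ℕ) : WithBot ℕ) = ((q + p : ℕ) : WithBot ℕ) by rw [Nat.add_comm]]
      exact withBot_add_lt _ q p (toPolyAux_degree_lt q x.2)
  -- injectivity
  have hLinj : Function.Injective Lf := by
    rw [← LinearMap.ker_eq_bot, LinearMap.ker_eq_bot']
    intro x hx
    have hScoeff : ∀ j, (toPolyAux p x.1 * Q₀ + P₀ * toPolyAux q x.2).coeff j = 0 := by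
      intro j
      by_cases hj : j < r
      · have h := congrFun hx ⟨r - 1 - j, by omega⟩
        rw [hLfapply] at h
        simpa [show r - 1 - (r - 1 - j) = j by omega] using h
      · exact Polynomial.coeff_eq_zero_of_degree_lt
          ((hsyl_deg x).trans_le (by exact_mod_cast Nat.le_of_not_lt hj))
    have hS0 : toPolyAux p x.1 * Q₀ + P₀ * toPolyAux q x.2 = 0 :=
      Polynomial.ext fun j => by rw [hScoeff, Polynomial.coeff_zero]
    have hdvd : P₀ ∣ toPolyAux p x.1 * Q₀ := by
      refine ⟨-toPolyAux q x.2, ?_⟩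
      have h2 : toPolyAux p x.1 * Q₀ = -(P₀ * toPolyAux q x.2) := by
        rw [eq_neg_iff_add_eq_zero]; exact hS0
      rw [h2]; ring
    have hA0 : toPolyAux p x.1 = 0 := by
      apply Polynomial.eq_zero_of_dvd_of_degree_lt (hcop.dvd_of_dvd_mul_right hdvd)
      rw [hP₀deg]
      exact toPolyAux_degree_lt p x.1
    have hB0 : toPolyAux q x.2 = 0 := by
      have h3 : P₀ * toPolyAux q x.2 = 0 := by
        rw [hA0] at hS0
        simpa using hS0
      rcases mul_eq_zero.1 h3 with h | h
      · exact absurd h hP₀.ne_zero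
      · exact h
    have h1 : x.1 = 0 := (toPolyAux_eq_zero_iff p x.1).1 hA0
    have h2 : x.2 = 0 := (toPolyAux_eq_zero_iff q x.2).1 hB0
    exact Prod.ext h1 h2
  have hfr : Module.finrank ℝ ((Fin p → ℝ) × (Fin q → ℝ)) = Module.finrank ℝ (Fin r → ℝ) := by
    rw [Module.finrank_prod, Module.finrank_fin_fun, Module.finrank_fin_fun,
      Module.finrank_fin_fun, hpq]
  set Leq : ((Fin p → ℝ) × (Fin q → ℝ)) ≃ₗ[ℝ] (Fin r → ℝ) :=
    LinearMap.linearEquivOfInjective Lf hLinj hfr with hLeq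
  set iE : ((Fin p → ℝ) × (Fin q → ℝ)) ≃L[ℝ] (Fin r → ℝ) :=
    Leq.toContinuousLinearEquiv with hiE
  have hiEapply : ∀ x, (iE : ((Fin p → ℝ) × (Fin q → ℝ)) →L[ℝ] (Fin r → ℝ)) x = Lf x := by
    intro x
    show iE x = Lf x
    rw [hiE]
    rw [LinearEquiv.coe_toContinuousLinearEquiv']
    exact LinearMap.linearEquivOfInjective_apply hLinj hfr x
  -- the bilinear remainder
  set B2 : (Fin p → ℝ) →ₗ[ℝ] (Fin q → ℝ) →ₗ[ℝ] (Fin r → ℝ) :=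
    LinearMap.mk₂ ℝ (fun A B k => (toPolyAux p A * toPolyAux q B).coeff (r - 1 - (k : ℕ)))
      (fun A A' B => by
        funext k
        simp only [toPolyAux_add, add_mul, Polynomial.coeff_add, Pi.add_apply])
      (fun t A B => by
        funext k
        simp only [toPolyAux_smul, Pi.smul_apply, smul_eq_mul]
        rw [show Polynomial.C t * toPolyAux p A * toPolyAux q B
            = Polynomial.C t * (toPolyAux p A * toPolyAux q B) by ring, Polynomial.coeff_C_mul])
      (fun A B B' => by
        funext k
        simp only [toPolyAux_add, mul_add, Polynomial.coeff_add, Pi.add_apply])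
      (fun t A B => by
        funext k
        simp only [toPolyAux_smul, Pi.smul_apply, smul_eq_mul]
        rw [show toPolyAux p A * (Polynomial.C t * toPolyAux q B)
            = Polynomial.C t * (toPolyAux p A * toPolyAux q B) by ring, Polynomial.coeff_C_mul])
      with hB2
  set Bc : (Fin p → ℝ) →L[ℝ] (Fin q → ℝ) →L[ℝ] (Fin r → ℝ) :=
    LinearMap.toContinuousLinearMap
      ((LinearMap.toContinuousLinearMap :
          ((Fin q → ℝ) →ₗ[ℝ] (Fin r → ℝ)) ≃ₗ[ℝ] ((Fin q → ℝ) →L[ℝ] (Fin r → ℝ))).toLinearMap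
        ∘ₗ B2) with hBc
  have hBcapply : ∀ A B k, Bc A B k
      = (toPolyAux p A * toPolyAux q B).coeff (r - 1 - (k : ℕ)) := by
    intro A B k
    simp only [hBc, LinearMap.coe_toContinuousLinearMap', LinearMap.coe_comp,
      LinearEquiv.coe_coe, Function.comp_apply]
    rfl
  -- key decomposition of Φ
  have hkey : Φ = fun x => Φ X₀ + (iE : ((Fin p → ℝ) × (Fin q → ℝ)) →L[ℝ] (Fin r → ℝ)) (x - X₀)
      + Bc (x - X₀).1 (x - X₀).2 := by
    funext x k
    have e1 : monicOfCoeffs p x.1 = P₀ + toPolyAux p (x.1 - a₀) := by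
      rw [← hPa, monicOfCoeffs_eq, monicOfCoeffs_eq, toPolyAux_sub]
      ring
    have e2 : monicOfCoeffs q x.2 = Q₀ + toPolyAux q (x.2 - b₀) := by
      rw [← hQb, monicOfCoeffs_eq, monicOfCoeffs_eq, toPolyAux_sub]
      ring
    have hprod : monicOfCoeffs p x.1 * monicOfCoeffs q x.2
        = P₀ * Q₀ + (toPolyAux p (x.1 - a₀) * Q₀ + P₀ * toPolyAux q (x.2 - b₀))
          + toPolyAux p (x.1 - a₀) * toPolyAux q (x.2 - b₀) := by
      rw [e1, e2]; ring
    have hΦX₀ : Φ X₀ k = (P₀ * Q₀).coeff (r - 1 - (k : ℕ)) := by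
      show (monicOfCoeffs p a₀ * monicOfCoeffs q b₀).coeff _ = _
      rw [hPa, hQb]
    show (monicOfCoeffs p x.1 * monicOfCoeffs q x.2).coeff (r - 1 - (k : ℕ)) = _
    simp only [Pi.add_apply]
    rw [hΦX₀, hiEapply, hLfapply, hBcapply, hprod]
    have hsub1 : (x - X₀).1 = x.1 - a₀ := rfl
    have hsub2 : (x - X₀).2 = x.2 - b₀ := rfl
    rw [hsub1, hsub2, Polynomial.coeff_add, Polynomial.coeff_add]
  -- strict differentiability with invertible derivative
  have hΦstrict : HasStrictFDerivAt Φ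
      (iE : ((Fin p → ℝ) × (Fin q → ℝ)) →L[ℝ] (Fin r → ℝ)) X₀ := by
    have h1 : HasStrictFDerivAt
        (fun x => Φ X₀ + (iE : ((Fin p → ℝ) × (Fin q → ℝ)) →L[ℝ] (Fin r → ℝ)) (x - X₀))
        ((iE : ((Fin p → ℝ) × (Fin q → ℝ)) →L[ℝ] (Fin r → ℝ)).comp
          (ContinuousLinearMap.id ℝ _)) X₀ := by
      exact ((iE : ((Fin p → ℝ) × (Fin q → ℝ)) →L[ℝ] (Fin r → ℝ)).hasStrictFDerivAt.comp X₀
        ((hasStrictFDerivAt_id X₀).sub_const X₀)).const_add (Φ X₀)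
    have h2 : HasStrictFDerivAt (fun x => Bc (x - X₀).1 (x - X₀).2)
        ((Bc.isBoundedBilinearMap.deriv (X₀ - X₀)).comp (ContinuousLinearMap.id ℝ _)) X₀ := by
      have hinner : HasStrictFDerivAt (fun x : (Fin p → ℝ) × (Fin q → ℝ) => x - X₀)
          (ContinuousLinearMap.id ℝ _) X₀ := (hasStrictFDerivAt_id X₀).sub_const X₀
      exact HasStrictFDerivAt.comp (x := X₀)
        (g := fun y : (Fin p → ℝ) × (Fin q → ℝ) => Bc y.1 y.2)
        (f := fun x : (Fin p → ℝ) × (Fin q → ℝ) => x - X₀)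
        (hg := Bc.isBoundedBilinearMap.hasStrictFDerivAt (X₀ - X₀)) (hf := hinner)
    have hsum := h1.add h2
    rw [hkey]
    refine hsum.congr_fderiv ?_
    refine ContinuousLinearMap.ext fun y => ?_
    simp [IsBoundedBilinearMap.deriv_apply, sub_self]
  -- inverse function theorem
  set f := hΦstrict.toOpenPartialHomeomorph Φ with hf
  have hfcoe : ⇑f = Φ := hΦstrict.toOpenPartialHomeomorph_coe
  set ψ : (Fin r → ℝ) → (Fin p → ℝ) × (Fin q → ℝ) := ⇑f.symm with hψ
  set Y₀ : Fin r → ℝ := Φ X₀ with hY₀def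
  have hψana : AnalyticAt ℝ ψ Y₀ := by
    have h1 : AnalyticAt ℝ (⇑f) X₀ := by rw [hfcoe]; exact hΦana X₀
    have h2 : fderiv ℝ (⇑f) X₀
        = (iE : ((Fin p → ℝ) × (Fin q → ℝ)) →L[ℝ] (Fin r → ℝ)) := by
      rw [hfcoe]; exact hΦstrict.hasFDerivAt.fderiv
    have := f.analyticAt_symm' hΦstrict.mem_toOpenPartialHomeomorph_source h1 h2
    rwa [hfcoe] at this
  have hψX₀ : ψ Y₀ = X₀ := by
    have := f.left_inv hΦstrict.mem_toOpenPartialHomeomorph_source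
    rw [hfcoe] at this
    exact this
  have hrinv : ∀ᶠ y in nhds Y₀, Φ (ψ y) = y := by
    have := hΦstrict.eventually_right_inverse
    rw [hΦstrict.localInverse_def] at this
    exact this
  have hψana_ev : ∀ᶠ y in nhds Y₀, AnalyticAt ℝ ψ y := hψana.eventually_analyticAt
  obtain ⟨t, htnhds, htprop⟩ := (hrinv.and hψana_ev).exists_mem
  obtain ⟨V, hVt, hVopen, hY₀V⟩ := mem_nhds_iff.1 htnhds
  -- coefficient vector map
  set cvec : (Fin m → ℝ) → (Fin r → ℝ) := fun x k => c k x with hcvec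
  have hcana : AnalyticOnNhd ℝ cvec Ω := fun x hx =>
    AnalyticAt.pi fun k => hc k x hx
  have hcont : ContinuousOn cvec Ω := fun x hx => ((hcana x hx).continuousAt).continuousWithinAt
  have hcvx₀ : cvec x₀ = Y₀ := by
    funext k
    have hk : (k : ℕ) < r := k.2
    have e1 : Y₀ k = (P₀ * Q₀).coeff (r - 1 - (k : ℕ)) := by
      show (monicOfCoeffs p a₀ * monicOfCoeffs q b₀).coeff _ = _
      rw [hPa, hQb]
    rw [e1, ← hsplit]
    rw [monicOfCoeffs_coeff_lt r _ (r - 1 - (k : ℕ)) (by omega)]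
    show c k x₀ = c ⟨r - 1 - (r - 1 - (k : ℕ)), _⟩ x₀
    congr 1
    ext
    simp
    omega
  -- the neighbourhood
  refine ⟨Ω ∩ cvec ⁻¹' V, fun x => (ψ (cvec x)).1, fun x => (ψ (cvec x)).2,
    hcont.isOpen_inter_preimage hΩ hVopen,
    ⟨hx₀, by rw [Set.mem_preimage, hcvx₀]; exact hY₀V⟩,
    Set.inter_subset_left, ?_, ?_, ?_, ?_, ?_⟩
  · intro x hx
    have h1 : AnalyticAt ℝ ψ (cvec x) := (htprop _ (hVt hx.2)).2
    have h2 : AnalyticAt ℝ cvec x := hcana x hx.1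
    have h3 : AnalyticAt ℝ (fun y : Fin r → ℝ => (ψ y).1) (cvec x) :=
      AnalyticAt.comp (g := fun z : (Fin p → ℝ) × (Fin q → ℝ) => z.1) (f := ψ)
        ((ContinuousLinearMap.fst ℝ (Fin p → ℝ) (Fin q → ℝ)).analyticAt _) h1
    exact AnalyticAt.comp (g := fun y : Fin r → ℝ => (ψ y).1) (f := cvec) h3 h2
  · intro x hx
    have h1 : AnalyticAt ℝ ψ (cvec x) := (htprop _ (hVt hx.2)).2
    have h2 : AnalyticAt ℝ cvec x := hcana x hx.1
    have h3 : AnalyticAt ℝ (fun y : Fin r → ℝ => (ψ y).2) (cvec x) :=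
      AnalyticAt.comp (g := fun z : (Fin p → ℝ) × (Fin q → ℝ) => z.2) (f := ψ)
        ((ContinuousLinearMap.snd ℝ (Fin p → ℝ) (Fin q → ℝ)).analyticAt _) h1
    exact AnalyticAt.comp (g := fun y : Fin r → ℝ => (ψ y).2) (f := cvec) h3 h2
  · intro x hx
    have hy : Φ (ψ (cvec x)) = cvec x := (htprop _ (hVt hx.2)).1
    have hMm : (monicOfCoeffs p (ψ (cvec x)).1 * monicOfCoeffs q (ψ (cvec x)).2).Monic :=
      (monicOfCoeffs_monic p _).mul (monicOfCoeffs_monic q _)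
    have hMd : (monicOfCoeffs p (ψ (cvec x)).1 * monicOfCoeffs q (ψ (cvec x)).2).natDegree = r := by
      rw [(monicOfCoeffs_monic p _).natDegree_mul (monicOfCoeffs_monic q _),
        monicOfCoeffs_natDegree, monicOfCoeffs_natDegree, hpq]
    have hrec := monicOfCoeffs_recon r _ hMm hMd
    have hco : (fun i : Fin r => (monicOfCoeffs p (ψ (cvec x)).1
        * monicOfCoeffs q (ψ (cvec x)).2).coeff (r - 1 - (i : ℕ))) = fun k => c k x := by
      funext i
      have := congrFun hy i
      exact this
    rw [← hrec, hco]
  · show monicOfCoeffs p (ψ (cvec x₀)).1 = P₀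
    rw [hcvx₀, hψX₀]
    exact hPa
  · show monicOfCoeffs q (ψ (cvec x₀)).2 = Q₀
    rw [hcvx₀, hψX₀]
    exact hQb
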